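/- Let T = (S,Σ,κ) be an STS, μ a probability measure on S, and B ∈ Σ with avoid-set B̃. Define, for n ∈ ℕ, p_n^Yes = Prob_μ(F≤n B) and p_n^No = Prob_μ((S∖B) U≤n B̃). If T is D(μ,B), then the sequence (p_n^Yes) is nondecreasing, the sequence (1 − p_n^No) is nonincreasing, p_n^Yes ≤ 1 − p_n^No for all n, and both sequences converge to Prob_μ(F B); in particular lim_{n→∞}(p_n^Yes + p_n^No) = 1. -/

import Mathlib

open MeasureTheory ProbabilityTheory ENNReal Filter Topology

namespace STS

variable {S : Type*} [MeasurableSpace S]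

/-- Probability of the cylinder `Cyl(A 0, …, A n)` for the Markov chain with kernel `κ`
and initial distribution `μ`. -/
noncomputable def cylProb (κ : Kernel S S) : ℕ → Measure S → (ℕ → Set S) → ℝ≥0∞
  | 0, μ, A => μ (A 0)
  | n + 1, μ, A => ∫⁻ s in A 0, cylProb κ n (κ s) (fun i => A (i + 1)) ∂μ

/-- `P` assigns to each initial (probability) distribution the path measure (on `ℕ → S`,
with the product σ-algebra) of the time-homogeneous Markov chain with transition kernel `κ`,
as given by the Ionescu–Tulcea construction: it is the unique probability measure giving
cylinders their prescribed probabilities. -/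
def IsPathMeasure (κ : Kernel S S) (P : Measure S → Measure (ℕ → S)) : Prop :=
  ∀ μ : Measure S, IsProbabilityMeasure μ →
    IsProbabilityMeasure (P μ) ∧
    ∀ (n : ℕ) (A : ℕ → Set S), (∀ i, MeasurableSet (A i)) →
      P μ {ρ | ∀ i ≤ n, ρ i ∈ A i} = cylProb κ n μ A

/-- The path event `F B`: eventually reach `B`. -/
def evF (B : Set S) : Set (ℕ → S) := {ρ | ∃ k, ρ k ∈ B}

/-- The path event `F≤n B`. -/
def evFle (n : ℕ) (B : Set S) : Set (ℕ → S) := {ρ | ∃ k ≤ n, ρ k ∈ B}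

/-- The path event `F≥p B`. -/
def evFge (p : ℕ) (B : Set S) : Set (ℕ → S) := {ρ | ∃ k, p ≤ k ∧ ρ k ∈ B}

/-- The path event `GF B`: visit `B` infinitely often. -/
def evGF (B : Set S) : Set (ℕ → S) := {ρ | ∀ n, ∃ k, n ≤ k ∧ ρ k ∈ B}

/-- The path event `FG B`: eventually stay in `B` forever. -/
def evFG (B : Set S) : Set (ℕ → S) := {ρ | ∃ n, ∀ k, n ≤ k → ρ k ∈ B}

/-- The until event `B' U B`. -/
def evU (B' B : Set S) : Set (ℕ → S) := {ρ | ∃ k, ρ k ∈ B ∧ ∀ j < k, ρ j ∈ B'}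

/-- The bounded until event `B' U≤n B`. -/
def evUle (n : ℕ) (B' B : Set S) : Set (ℕ → S) := {ρ | ∃ k ≤ n, ρ k ∈ B ∧ ∀ j < k, ρ j ∈ B'}

/-- The avoid-set `B̃` of `B`: states from which `B` is reached with probability `0`. -/
def avoid (P : Measure S → Measure (ℕ → S)) (B : Set S) : Set S :=
  {s | P (Measure.dirac s) (evF B) = 0}

/-- `T` is decisive w.r.t. `B` from `μ`. -/
def Decisive (P : Measure S → Measure (ℕ → S)) (μ : Measure S) (B : Set S) : Prop :=
  P μ (evF B ∪ evF (avoid P B)) = 1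

/-- `T` is strongly decisive w.r.t. `B` from `μ`. -/
def StronglyDecisive (P : Measure S → Measure (ℕ → S)) (μ : Measure S) (B : Set S) : Prop :=
  P μ (evGF B ∪ evF (avoid P B)) = 1

/-- `T` is persistently decisive w.r.t. `B` from `μ`. -/
def PersistentlyDecisive (P : Measure S → Measure (ℕ → S)) (μ : Measure S) (B : Set S) : Prop :=
  ∀ p : ℕ, P μ (evFge p B ∪ evFge p (avoid P B)) = 1

/-- `PreProb(B)`: measurable sets `B'` from which `B` is reached in one step with positive
probability, whatever the initial distribution concentrated on `B'`. -/
def PreProb (P : Measure S → Measure (ℕ → S)) (B : Set S) : Set (Set S) :=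
  {B' | MeasurableSet B' ∧ ∀ μ' : Measure S, IsProbabilityMeasure μ' → μ' B' = 1 →
    0 < P μ' {ρ | ρ 0 ∈ B' ∧ ρ 1 ∈ B}}

/-- `T` is fair w.r.t. `B` from `μ`. -/
def Fair (P : Measure S → Measure (ℕ → S)) (μ : Measure S) (B : Set S) : Prop :=
  ∀ B' ∈ PreProb P B, 0 < P μ (evGF B') →
    P μ (evGF B ∩ evGF B') = P μ (evGF B')

/-- The one-step measure transformer `Ω_T`. -/
noncomputable def Omega (κ : Kernel S S) (μ : Measure S) : Measure S :=
  μ.bind (fun s => κ s)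

/-- Two measures are qualitatively equivalent if they have the same null (measurable) sets. -/
def QualEquiv {T : Type*} [MeasurableSpace T] (μ ν : Measure T) : Prop :=
  ∀ A : Set T, MeasurableSet A → (μ A = 0 ↔ ν A = 0)

/-- `T₂ = (S₂,κ₂)` is an `α`-abstraction of `T₁ = (S₁,κ₁)`. -/
def IsAbstraction {S₁ S₂ : Type*} [MeasurableSpace S₁] [MeasurableSpace S₂]
    (κ₁ : Kernel S₁ S₁) (κ₂ : Kernel S₂ S₂) (α : S₁ → S₂) : Prop :=
  ∀ μ : Measure S₁, IsProbabilityMeasure μ →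
    QualEquiv (Measure.map α (Omega κ₁ μ)) (Omega κ₂ (Measure.map α μ))


section Aux

variable {S : Type*} [MeasurableSpace S]

/-- Measurability of `s ↦ cylProb κ n (κ s) A`. -/
lemma measurable_cylProb_kernel (κ : Kernel S S) [IsMarkovKernel κ] :
    ∀ (n : ℕ) (A : ℕ → Set S), (∀ i, MeasurableSet (A i)) →
      Measurable (fun s => cylProb κ n (κ s) A)
  | 0, A, hA => by
      simpa [cylProb] using κ.measurable_coe (hA 0)
  | n + 1, A, hA => by
      simp only [cylProb]
      exact (measurable_cylProb_kernel κ n (fun i => A (i + 1))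
        (fun i => hA (i + 1))).setLIntegral_kernel (hA 0)

/-- `cylProb` starting from a Dirac measure, as an indicator. -/
lemma cylProb_dirac_succ (κ : Kernel S S) [IsMarkovKernel κ] (n : ℕ) (A : ℕ → Set S)
    (hA : ∀ i, MeasurableSet (A i)) (s : S) :
    cylProb κ (n + 1) (Measure.dirac s) A
      = (A 0).indicator (fun t => cylProb κ n (κ t) (fun i => A (i + 1))) s := by
  simp only [cylProb]
  rw [← lintegral_indicator (hA 0), lintegral_dirac' s
    ((measurable_cylProb_kernel κ n _ (fun i => hA (i + 1))).indicator (hA 0))]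

/-- Measurability of `s ↦ cylProb κ n (δ_s) A`. -/
lemma measurable_cylProb_dirac (κ : Kernel S S) [IsMarkovKernel κ] (n : ℕ) (A : ℕ → Set S)
    (hA : ∀ i, MeasurableSet (A i)) :
    Measurable (fun s => cylProb κ n (Measure.dirac s) A) := by
  cases n with
  | zero =>
      have : (fun s => cylProb κ 0 (Measure.dirac s) A)
          = (A 0).indicator (1 : S → ℝ≥0∞) := by
        funext s
        simp [cylProb, Measure.dirac_apply' s (hA 0)]
      rw [this]
      exact measurable_one.indicator (hA 0)
  | succ n =>
      have : (fun s => cylProb κ (n + 1) (Measure.dirac s) A)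
          = (A 0).indicator (fun t => cylProb κ n (κ t) (fun i => A (i + 1))) := by
        funext s; exact cylProb_dirac_succ κ n A hA s
      rw [this]
      exact (measurable_cylProb_kernel κ n _ (fun i => hA (i + 1))).indicator (hA 0)

lemma measurableSet_evF {B : Set S} (hB : MeasurableSet B) :
    MeasurableSet (evF B) := by
  have : evF B = ⋃ k : ℕ, (fun ρ : ℕ → S => ρ k) ⁻¹' B := by
    ext ρ; simp [evF]
  rw [this]
  exact MeasurableSet.iUnion fun k => (measurable_pi_apply k) hB

lemma measurableSet_evFle {B : Set S} (hB : MeasurableSet B) (n : ℕ) :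
    MeasurableSet (evFle n B) := by
  have : evFle n B = ⋃ k : ℕ, ⋃ (_ : k ≤ n), (fun ρ : ℕ → S => ρ k) ⁻¹' B := by
    ext ρ; simp [evFle]
  rw [this]
  exact MeasurableSet.iUnion fun k => MeasurableSet.iUnion fun _ =>
    (measurable_pi_apply k) hB

lemma measurableSet_cylEvent {A : ℕ → Set S} (hA : ∀ i, MeasurableSet (A i)) (n : ℕ) :
    MeasurableSet {ρ : ℕ → S | ∀ i ≤ n, ρ i ∈ A i} := by
  have : {ρ : ℕ → S | ∀ i ≤ n, ρ i ∈ A i}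
      = ⋂ i : ℕ, ⋂ (_ : i ≤ n), (fun ρ : ℕ → S => ρ i) ⁻¹' A i := by
    ext ρ; simp
  rw [this]
  exact MeasurableSet.iInter fun i => MeasurableSet.iInter fun _ =>
    (measurable_pi_apply i) (hA i)

/-- The avoid set is measurable. -/
lemma measurableSet_avoid (κ : Kernel S S) [IsMarkovKernel κ]
    (P : Measure S → Measure (ℕ → S)) (hP : IsPathMeasure κ P)
    {B : Set S} (hB : MeasurableSet B) :
    MeasurableSet (avoid P B) := by
  have hprob : ∀ s : S, IsProbabilityMeasure (P (Measure.dirac s)) :=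
    fun s => (hP (Measure.dirac s) inferInstance).1
  have hcyl := fun s : S => (hP (Measure.dirac s) inferInstance).2
  have key : avoid P B
      = ⋂ n : ℕ, (fun s => cylProb κ n (Measure.dirac s) (fun _ => Bᶜ)) ⁻¹' {1} := by
    ext s
    have hprobs := hprob s
    simp only [avoid, Set.mem_setOf_eq, Set.mem_iInter, Set.mem_preimage,
      Set.mem_singleton_iff]
    constructor
    · intro h n
      rw [← hcyl s n (fun _ => Bᶜ) (fun _ => hB.compl)]
      have hsub : {ρ : ℕ → S | ∀ i ≤ n, ρ i ∈ Bᶜ}ᶜ ⊆ evF B := by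
        intro ρ hρ
        simp only [Set.mem_compl_iff, Set.mem_setOf_eq, not_forall] at hρ
        obtain ⟨k, _, hk⟩ := hρ
        exact ⟨k, by simpa using hk⟩
      have h0 : P (Measure.dirac s) {ρ : ℕ → S | ∀ i ≤ n, ρ i ∈ Bᶜ}ᶜ = 0 :=
        measure_mono_null hsub h
      rwa [prob_compl_eq_zero_iff
        (measurableSet_cylEvent (fun _ => hB.compl) n)] at h0
    · intro h
      have hF : evF B = ⋃ n : ℕ, {ρ : ℕ → S | ∀ i ≤ n, ρ i ∈ Bᶜ}ᶜ := by
        ext ρ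
        simp only [evF, Set.mem_setOf_eq, Set.mem_iUnion, Set.mem_compl_iff,
          not_forall]
        constructor
        · rintro ⟨k, hk⟩; exact ⟨k, k, le_refl k, by simpa using hk⟩
        · rintro ⟨n, k, _, hk⟩; exact ⟨k, by simpa using hk⟩
      rw [hF]
      refine measure_iUnion_null fun n => ?_
      rw [prob_compl_eq_zero_iff (measurableSet_cylEvent (fun _ => hB.compl) n),
        hcyl s n (fun _ => Bᶜ) (fun _ => hB.compl)]
      exact h n
  rw [key]
  exact MeasurableSet.iInter fun n =>
    (measurable_cylProb_dirac κ n _ (fun _ => hB.compl)) (measurableSet_singleton 1)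

/-- The avoid set is disjoint from `B`. -/
lemma avoid_disjoint (κ : Kernel S S) [IsMarkovKernel κ]
    (P : Measure S → Measure (ℕ → S)) (hP : IsPathMeasure κ P)
    {B : Set S} (hB : MeasurableSet B) {s : S} (hs : s ∈ avoid P B) : s ∉ B := by
  intro hsB
  have hprobs : IsProbabilityMeasure (P (Measure.dirac s)) :=
    (hP (Measure.dirac s) inferInstance).1
  have hcyl := (hP (Measure.dirac s) inferInstance).2 0 (fun _ => B) (fun _ => hB)
  have h1 : P (Measure.dirac s) {ρ : ℕ → S | ∀ i ≤ 0, ρ i ∈ B} = 1 := by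
    rw [hcyl]
    simp [cylProb, Measure.dirac_apply' s hB, Set.indicator_of_mem hsB]
  have hsub : {ρ : ℕ → S | ∀ i ≤ 0, ρ i ∈ B} ⊆ evF B := by
    intro ρ hρ; exact ⟨0, hρ 0 le_rfl⟩
  have : P (Measure.dirac s) (evF B) = 0 := hs
  have h2 : (1 : ℝ≥0∞) ≤ P (Measure.dirac s) (evF B) := h1 ▸ measure_mono hsub
  rw [this] at h2
  exact (by norm_num : ¬ ((1 : ℝ≥0∞) ≤ 0)) h2

/-- The pattern of measurable sets: `B̃` at `k`, `B` at `m`, everything else free. -/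
def pat (Bt B : Set S) (k m : ℕ) : ℕ → Set S :=
  fun i => if i = k then Bt else if i = m then B else Set.univ

lemma pat_measurable {Bt B : Set S} (hBt : MeasurableSet Bt) (hB : MeasurableSet B)
    (k m i : ℕ) : MeasurableSet (pat Bt B k m i) := by
  unfold pat; split_ifs <;> first | exact hBt | exact hB | exact MeasurableSet.univ

/-- Key lemma: the probability of visiting `B̃` at time `k` and `B` at time `m > k` is `0`. -/
lemma cylProb_pat_zero (κ : Kernel S S) [IsMarkovKernel κ]
    (P : Measure S → Measure (ℕ → S)) (hP : IsPathMeasure κ P)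
    {B : Set S} (hB : MeasurableSet B) :
    ∀ (k m : ℕ), k < m → ∀ (μ : Measure S), IsProbabilityMeasure μ →
      cylProb κ m μ (pat (avoid P B) B k m) = 0 := by
  have hBt : MeasurableSet (avoid P B) := measurableSet_avoid κ P hP hB
  intro k
  induction k with
  | zero =>
      intro m hm μ hμ
      obtain ⟨m', rfl⟩ : ∃ m', m = m' + 1 := ⟨m - 1, by omega⟩
      have h0 : pat (avoid P B) B 0 (m' + 1) 0 = avoid P B := by simp [pat]
      simp only [cylProb, h0]
      have hzero : ∀ s ∈ avoid P B,
          cylProb κ m' (κ s) (fun i => pat (avoid P B) B 0 (m' + 1) (i + 1)) = 0 := by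
        intro s hs
        have hd : cylProb κ (m' + 1) (Measure.dirac s) (pat (avoid P B) B 0 (m' + 1))
            = cylProb κ m' (κ s) (fun i => pat (avoid P B) B 0 (m' + 1) (i + 1)) := by
          rw [cylProb_dirac_succ κ m' _ (pat_measurable hBt hB 0 (m' + 1)) s,
            h0, Set.indicator_of_mem hs]
        rw [← hd]
        have hprobs : IsProbabilityMeasure (P (Measure.dirac s)) :=
          (hP (Measure.dirac s) inferInstance).1
        rw [← (hP (Measure.dirac s) inferInstance).2 (m' + 1) _
          (pat_measurable hBt hB 0 (m' + 1))]
        have hsub : {ρ : ℕ → S | ∀ i ≤ m' + 1, ρ i ∈ pat (avoid P B) B 0 (m' + 1) i}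
            ⊆ evF B := by
          intro ρ hρ
          refine ⟨m' + 1, ?_⟩
          have := hρ (m' + 1) le_rfl
          simpa [pat] using this
        exact measure_mono_null hsub hs
      calc ∫⁻ s in avoid P B,
            cylProb κ m' (κ s) (fun i => pat (avoid P B) B 0 (m' + 1) (i + 1)) ∂μ
          = ∫⁻ _ in avoid P B, 0 ∂μ :=
            setLIntegral_congr_fun hBt (fun s hs => hzero s hs)
        _ = 0 := lintegral_zero
  | succ k ih =>
      intro m hm μ hμ
      obtain ⟨m', rfl⟩ : ∃ m', m = m' + 1 := ⟨m - 1, by omega⟩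
      have hk : k < m' := by omega
      have h0 : pat (avoid P B) B (k + 1) (m' + 1) 0 = Set.univ := by
        simp [pat]
      have hshift : (fun i => pat (avoid P B) B (k + 1) (m' + 1) (i + 1))
          = pat (avoid P B) B k m' := by
        funext i
        unfold pat
        by_cases h1 : i = k
        · simp [h1]
        · have h1' : ¬ (i + 1 = k + 1) := by omega
          by_cases h2 : i = m'
          · have : ¬ (i + 1 = k + 1) := by omega
            simp [h1, h2, h1']
          · have h2' : ¬ (i + 1 = m' + 1) := by omega
            simp [h1, h2, h1', h2']
      simp only [cylProb, h0, hshift]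
      calc ∫⁻ s in Set.univ, cylProb κ m' (κ s) (pat (avoid P B) B k m') ∂μ
          = ∫⁻ _ in Set.univ, 0 ∂μ :=
            setLIntegral_congr_fun MeasurableSet.univ
              (fun s _ => ih m' hk (κ s) inferInstance)
        _ = 0 := lintegral_zero

/-- A.s. one cannot visit `B̃` and later (or simultaneously) visit `B`. -/
lemma evF_inter_evU_null (κ : Kernel S S) [IsMarkovKernel κ]
    (P : Measure S → Measure (ℕ → S)) (hP : IsPathMeasure κ P)
    (μ : Measure S) (hμ : IsProbabilityMeasure μ)
    {B : Set S} (hB : MeasurableSet B) :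
    P μ (evF B ∩ evU Bᶜ (avoid P B)) = 0 := by
  have hBt : MeasurableSet (avoid P B) := measurableSet_avoid κ P hP hB
  have hsub : evF B ∩ evU Bᶜ (avoid P B)
      ⊆ ⋃ (k : ℕ), ⋃ (m : ℕ), ⋃ (_ : k < m),
          {ρ : ℕ → S | ρ k ∈ avoid P B ∧ ρ m ∈ B} := by
    rintro ρ ⟨⟨m, hmB⟩, ⟨k, hkA, hlt⟩⟩
    have hkm : k ≤ m := by
      by_contra h
      exact (hlt m (by omega)) hmB
    have hne : k ≠ m := by
      intro h
      exact avoid_disjoint κ P hP hB hkA (h ▸ hmB)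
    simp only [Set.mem_iUnion]
    exact ⟨k, m, by omega, hkA, hmB⟩
  refine measure_mono_null hsub ?_
  refine measure_iUnion_null fun k => measure_iUnion_null fun m =>
    measure_iUnion_null fun hkm => ?_
  have hev : {ρ : ℕ → S | ρ k ∈ avoid P B ∧ ρ m ∈ B}
      = {ρ : ℕ → S | ∀ i ≤ m, ρ i ∈ pat (avoid P B) B k m i} := by
    ext ρ
    simp only [Set.mem_setOf_eq]
    constructor
    · rintro ⟨h1, h2⟩ i _
      unfold pat
      split_ifs with hik him
      · exact hik ▸ h1
      · exact him ▸ h2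
      · trivial
    · intro h
      refine ⟨?_, ?_⟩
      · have := h k (le_of_lt hkm)
        simpa [pat] using this
      · have := h m le_rfl
        have hne : m ≠ k := by omega
        simpa [pat, hne] using this
  rw [hev, (hP μ hμ).2 m _ (pat_measurable hBt hB k m)]
  exact cylProb_pat_zero κ P hP hB k m hkm μ hμ

end Aux

/-- approximation scheme for reachability: under `D(μ,B)`, the sequences
`p_n^Yes = Prob_μ(F≤n B)` and `1 − p_n^No` (with `p_n^No = Prob_μ((S∖B) U≤n B̃)`) are
adjacent and both converge to `Prob_μ(F B)`. -/
theorem statement_18 {S : Type*} [MeasurableSpace S]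
    (κ : Kernel S S) [IsMarkovKernel κ]
    (P : Measure S → Measure (ℕ → S)) (hP : IsPathMeasure κ P)
    (μ : Measure S) (hμ : IsProbabilityMeasure μ)
    (B : Set S) (hB : MeasurableSet B)
    (hdec : Decisive P μ B) :
    Monotone (fun n : ℕ => P μ (evFle n B)) ∧
    Antitone (fun n : ℕ => 1 - P μ (evUle n Bᶜ (avoid P B))) ∧
    (∀ n : ℕ, P μ (evFle n B) ≤ 1 - P μ (evUle n Bᶜ (avoid P B))) ∧
    Tendsto (fun n : ℕ => P μ (evFle n B)) atTop (𝓝 (P μ (evF B))) ∧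
    Tendsto (fun n : ℕ => 1 - P μ (evUle n Bᶜ (avoid P B))) atTop (𝓝 (P μ (evF B))) ∧
    Tendsto (fun n : ℕ => P μ (evFle n B) + P μ (evUle n Bᶜ (avoid P B))) atTop (𝓝 1) := by
  classical
  have hBt : MeasurableSet (avoid P B) := measurableSet_avoid κ P hP hB
  have hPμprob : IsProbabilityMeasure (P μ) := (hP μ hμ).1
  have hnull : P μ (evF B ∩ evU Bᶜ (avoid P B)) = 0 := evF_inter_evU_null κ P hP μ hμ hB
  -- set-theoretic facts
  have hmonoF : Monotone (fun n => evFle n B) := by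
    intro a b hab ρ hρ
    obtain ⟨k, hk, h⟩ := hρ
    exact ⟨k, hk.trans hab, h⟩
  have hmonoU : Monotone (fun n => evUle n Bᶜ (avoid P B)) := by
    intro a b hab ρ hρ
    obtain ⟨k, hk, h⟩ := hρ
    exact ⟨k, hk.trans hab, h⟩
  have hUF : (⋃ n, evFle n B) = evF B := by
    ext ρ
    simp only [Set.mem_iUnion, evF, evFle, Set.mem_setOf_eq]
    constructor
    · rintro ⟨n, k, _, hk⟩; exact ⟨k, hk⟩
    · rintro ⟨k, hk⟩; exact ⟨k, k, le_rfl, hk⟩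
  have hUU : (⋃ n, evUle n Bᶜ (avoid P B)) = evU Bᶜ (avoid P B) := by
    ext ρ
    simp only [Set.mem_iUnion, evU, evUle, Set.mem_setOf_eq]
    constructor
    · rintro ⟨n, k, _, hk⟩; exact ⟨k, hk⟩
    · rintro ⟨k, hk⟩; exact ⟨k, k, le_rfl, hk⟩
  have hsubn : ∀ n, evFle n B ∩ evUle n Bᶜ (avoid P B) ⊆ evF B ∩ evU Bᶜ (avoid P B) := by
    rintro n ρ ⟨⟨k, _, hk⟩, ⟨m, _, hm⟩⟩
    exact ⟨⟨k, hk⟩, ⟨m, hm⟩⟩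
  have hnulln : ∀ n, P μ (evFle n B ∩ evUle n Bᶜ (avoid P B)) = 0 :=
    fun n => measure_mono_null (hsubn n) hnull
  -- the union has full measure
  have hcover : evF B ∪ evF (avoid P B) ⊆ evF B ∪ evU Bᶜ (avoid P B) := by
    rintro ρ (h | ⟨k, hk⟩)
    · exact Or.inl h
    · by_cases hc : ∃ j, j < k ∧ ρ j ∈ B
      · obtain ⟨j, _, hj⟩ := hc
        exact Or.inl ⟨j, hj⟩
      · push_neg at hc
        exact Or.inr ⟨k, hk, fun j hj => hc j hj⟩
  have hone : P μ (evF B ∪ evU Bᶜ (avoid P B)) = 1 := by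
    refine le_antisymm prob_le_one ?_
    calc (1 : ℝ≥0∞) = P μ (evF B ∪ evF (avoid P B)) := hdec.symm
      _ ≤ P μ (evF B ∪ evU Bᶜ (avoid P B)) := measure_mono hcover
  have hsum : P μ (evF B) + P μ (evU Bᶜ (avoid P B)) = 1 := by
    have h := measure_union_add_inter (μ := P μ) (evU Bᶜ (avoid P B)) (measurableSet_evF hB)
    rw [Set.union_comm, Set.inter_comm, hone, hnull, add_zero] at h
    rw [add_comm]
    exact h.symm
  -- finite-level inequalities
  have hsumle : ∀ n, P μ (evFle n B) + P μ (evUle n Bᶜ (avoid P B)) ≤ 1 := by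
    intro n
    have h := measure_union_add_inter (μ := P μ) (evUle n Bᶜ (avoid P B))
      (measurableSet_evFle hB n)
    rw [Set.union_comm, Set.inter_comm, hnulln n, add_zero] at h
    calc P μ (evFle n B) + P μ (evUle n Bᶜ (avoid P B))
        = P μ (evFle n B ∪ evUle n Bᶜ (avoid P B)) := by rw [add_comm]; exact h.symm
      _ ≤ 1 := prob_le_one
  -- the six conclusions
  refine ⟨?_, ?_, ?_, ?_, ?_, ?_⟩
  · intro a b hab
    exact measure_mono (hmonoF hab)
  · intro a b hab
    exact tsub_le_tsub_left (measure_mono (hmonoU hab)) 1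
  · intro n
    exact ENNReal.le_sub_of_add_le_right (measure_ne_top _ _) (hsumle n)
  · have := tendsto_measure_iUnion_atTop (μ := P μ) hmonoF
    rw [hUF] at this
    exact this
  · have hTU : Tendsto (fun n : ℕ => P μ (evUle n Bᶜ (avoid P B))) atTop
        (𝓝 (P μ (evU Bᶜ (avoid P B)))) := by
      have := tendsto_measure_iUnion_atTop (μ := P μ) hmonoU
      rw [hUU] at this
      exact this
    have hsub : (1 : ℝ≥0∞) - P μ (evU Bᶜ (avoid P B)) = P μ (evF B) :=
      ENNReal.sub_eq_of_eq_add (measure_ne_top _ _) hsum.symm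
    have := ENNReal.Tendsto.sub (tendsto_const_nhds (x := (1 : ℝ≥0∞))) hTU
      (Or.inl one_ne_top)
    rwa [hsub] at this
  · have hTY : Tendsto (fun n : ℕ => P μ (evFle n B)) atTop (𝓝 (P μ (evF B))) := by
      have := tendsto_measure_iUnion_atTop (μ := P μ) hmonoF
      rw [hUF] at this
      exact this
    have hTU : Tendsto (fun n : ℕ => P μ (evUle n Bᶜ (avoid P B))) atTop
        (𝓝 (P μ (evU Bᶜ (avoid P B)))) := by
      have := tendsto_measure_iUnion_atTop (μ := P μ) hmonoU
      rw [hUU] at this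
      exact this
    have := hTY.add hTU
    rwa [hsum] at this

end STS
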